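/- Assume additionally that g satisfies lim_{‖x‖→∞} g(x)/g(x−y)=1 for every y∈ℝ². Then for all T>0 and c̄>0, lim_{R→∞} P₂(R,c̄) = exp(−c̄/(1+1/T)) = exp(−c̄T/(1+T)). -/

import Mathlib

open MeasureTheory ProbabilityTheory Filter Real
open scoped ProbabilityTheory

local notation "E2" => EuclideanSpace ℝ (Fin 2)

lemma single_sub (a b : ℝ) : EuclideanSpace.single (0:Fin 2) (a-b)
    = EuclideanSpace.single (0:Fin 2) a - EuclideanSpace.single (0:Fin 2) b := by
  ext j; simp [EuclideanSpace.single_apply]; split <;> simp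

lemma norm_single' (t : ℝ) : ‖EuclideanSpace.single (0:Fin 2) t‖ = |t| := by
  rw [EuclideanSpace.norm_single]; simp


lemma single_ne (t : ℝ) (h : t ≠ 0) : EuclideanSpace.single (0:Fin 2) t ≠ (0:E2) := by
  intro h0
  have := norm_single' t
  rw [h0, norm_zero] at this
  exact h (abs_eq_zero.mp this.symm)

lemma ratio_lim (g : E2 → ℝ)
    (hg_pos : ∀ x : E2, x ≠ 0 → 0 < g x)
    (hg_mono : ∀ x y : E2, x ≠ 0 → y ≠ 0 → ‖x‖ ≤ ‖y‖ → g y ≤ g x)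
    (hg_ratio : ∀ y : E2,
      Tendsto (fun x : E2 => g x / g (x - y)) (Filter.comap norm atTop) (nhds 1))
    (w : E2) :
    Tendsto (fun R : ℝ => g (w - EuclideanSpace.single (0:Fin 2) R)
      / g (EuclideanSpace.single (0:Fin 2) R)) atTop (nhds 1) := by
  set a : ℝ → E2 := fun t => EuclideanSpace.single (0:Fin 2) t with ha
  set s : ℝ := ‖w‖ with hs
  have hs0 : 0 ≤ s := norm_nonneg w
  -- lower bound function tends to 1
  have hcomap : ∀ c : ℝ, Tendsto (fun R : ℝ => a (R + c)) atTop (Filter.comap norm atTop) := by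
    intro c
    rw [tendsto_comap_iff]
    have : (norm ∘ fun R : ℝ => a (R + c)) = fun R => |R + c| := by
      funext R; simp [ha, norm_single']
    rw [this]
    exact tendsto_abs_atTop_atTop.comp (tendsto_atTop_add_const_right _ c tendsto_id)
  have hlow : Tendsto (fun R : ℝ => g (a (R + s)) / g (a R)) atTop (nhds 1) := by
    have := (hg_ratio (a s)).comp (hcomap s)
    have heq : (fun x : E2 => g x / g (x - a s)) ∘ (fun R : ℝ => a (R + s))
        = fun R : ℝ => g (a (R + s)) / g (a R) := by
      funext R
      have : a (R + s) - a s = a R := by rw [ha]; simp only [← single_sub]; ring_nf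
      simp [Function.comp, this]
    rwa [heq] at this
  have hupp : Tendsto (fun R : ℝ => g (a (R - s)) / g (a R)) atTop (nhds 1) := by
    have h1 : Tendsto (fun R : ℝ => g (a R) / g (a (R - s))) atTop (nhds 1) := by
      have := (hg_ratio (a s)).comp (hcomap 0)
      have heq : (fun x : E2 => g x / g (x - a s)) ∘ (fun R : ℝ => a (R + 0))
          = fun R : ℝ => g (a R) / g (a (R - s)) := by
        funext R
        have : a (R + 0) - a s = a (R - s) := by rw [ha]; simp only [← single_sub]; ring_nf
        simp only [Function.comp, this]
        norm_num
      rwa [heq] at this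
    have h2 := h1.inv₀ one_ne_zero
    simp only [inv_div, inv_one] at h2
    exact h2
  -- squeeze
  apply tendsto_of_tendsto_of_tendsto_of_le_of_le' hlow hupp
  · -- g (a (R+s)) / g (a R) ≤ g (w - a R) / g (a R)
    filter_upwards [eventually_gt_atTop s] with R hR
    have hRpos : 0 < R := lt_of_le_of_lt hs0 hR
    have haR : a R ≠ 0 := single_ne R hRpos.ne'
    have hwz : 0 < ‖w - a R‖ := by
      have h1 : ‖a R‖ - ‖w‖ ≤ ‖a R - w‖ := norm_sub_norm_le _ _
      rw [norm_sub_rev] at h1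
      have h2 : ‖a R‖ = R := by rw [ha, norm_single', abs_of_pos hRpos]
      linarith
    have hw0 : w - a R ≠ 0 := by
      intro h; rw [h, norm_zero] at hwz; linarith
    have hps : a (R + s) ≠ 0 := single_ne _ (by positivity)
    have hle : ‖w - a R‖ ≤ ‖a (R + s)‖ := by
      have h1 : ‖w - a R‖ ≤ ‖w‖ + ‖a R‖ := norm_sub_le _ _
      have h2 : ‖a R‖ = R := by rw [ha, norm_single', abs_of_pos hRpos]
      have h3 : ‖a (R + s)‖ = R + s := by
        rw [ha, norm_single', abs_of_pos (by linarith)]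
      linarith
    have := hg_mono (w - a R) (a (R + s)) hw0 hps hle
    exact div_le_div_of_nonneg_right this (hg_pos _ haR).le
  · -- g (w - a R) / g (a R) ≤ g (a (R-s)) / g (a R)
    filter_upwards [eventually_gt_atTop s] with R hR
    have hRpos : 0 < R := lt_of_le_of_lt hs0 hR
    have haR2 : ‖a R‖ = R := by rw [ha, norm_single', abs_of_pos hRpos]
    have hwz : R - s ≤ ‖w - a R‖ := by
      have h1 : ‖a R‖ - ‖w‖ ≤ ‖a R - w‖ := norm_sub_norm_le _ _
      rw [norm_sub_rev] at h1
      linarith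
    have hw0 : w - a R ≠ 0 := by
      intro h; rw [h, norm_zero] at hwz; linarith
    have hms : a (R - s) ≠ 0 := single_ne _ (by intro h; linarith [sub_eq_zero.mp h])
    have hle : ‖a (R - s)‖ ≤ ‖w - a R‖ := by
      have h3 : ‖a (R - s)‖ = R - s := by
        rw [ha, norm_single', abs_of_pos (by linarith)]
      linarith
    exact div_le_div_of_nonneg_right (hg_mono _ _ hms hw0 hle) (hg_pos _ (single_ne R hRpos.ne')).le

lemma g_measurable (g : E2 → ℝ) (hg_cont : ContinuousOn g {(0 : E2)}ᶜ) : Measurable g := by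
  apply measurable_of_isOpen
  intro U hU
  have h1 : IsOpen ({(0:E2)}ᶜ ∩ g ⁻¹' U) :=
    hg_cont.isOpen_inter_preimage (isOpen_compl_singleton) hU
  have h2 : g ⁻¹' U = ({(0:E2)}ᶜ ∩ g ⁻¹' U) ∪ ({(0:E2)} ∩ g ⁻¹' U) := by
    rw [← Set.union_inter_distrib_right]; simp
    exact fun x _ => by by_cases h : x = 0 <;> simp [h]
  rw [h2]
  exact h1.measurableSet.union
    (((Set.countable_singleton _).mono Set.inter_subset_left).measurableSet)

lemma frac_lim_aux (u v : ℝ → ℝ) (T : ℝ) (hT : 0 < T)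
    (hupos : ∀ᶠ R in Filter.atTop, 0 < u R) (hvpos : ∀ᶠ R in Filter.atTop, 0 < v R)
    (hc : Filter.Tendsto (fun R => u R / v R) Filter.atTop (nhds 1)) :
    Filter.Tendsto (fun R => u R / (v R / T + u R)) Filter.atTop (nhds (T / (1 + T))) := by
  have hden : Filter.Tendsto (fun R => 1 / T + u R / v R) Filter.atTop (nhds (1 / T + 1)) :=
    tendsto_const_nhds.add hc
  have hlim : Filter.Tendsto (fun R => (u R / v R) / (1 / T + u R / v R)) Filter.atTop
      (nhds (1 / (1 / T + 1))) := hc.div hden (by positivity)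
  have heq : 1 / (1 / T + 1) = T / (1 + T) := by field_simp
  rw [heq] at hlim
  apply hlim.congr'
  filter_upwards [hupos, hvpos] with R hu hv
  have h1 : v R / T + u R ≠ 0 := by positivity
  have h2 : 1 / T + u R / v R ≠ 0 := by positivity
  field_simp

lemma frac_lim (g : E2 → ℝ) (T : ℝ) (hT : 0 < T)
    (hg_pos : ∀ x : E2, x ≠ 0 → 0 < g x)
    (hg_mono : ∀ x y : E2, x ≠ 0 → y ≠ 0 → ‖x‖ ≤ ‖y‖ → g y ≤ g x)
    (hg_ratio : ∀ y : E2,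
      Filter.Tendsto (fun x : E2 => g x / g (x - y)) (Filter.comap norm Filter.atTop) (nhds 1))
    (w : E2) :
    Filter.Tendsto (fun R : ℝ => g (w - EuclideanSpace.single (0:Fin 2) R)
      / (g (EuclideanSpace.single (0:Fin 2) R) / T + g (w - EuclideanSpace.single (0:Fin 2) R)))
      Filter.atTop (nhds (T / (1 + T))) := by
  apply frac_lim_aux _ _ T hT ?_ ?_ (ratio_lim g hg_pos hg_mono hg_ratio w)
  · filter_upwards [Filter.eventually_gt_atTop ‖w‖] with R hR
    have hRpos : 0 < R := lt_of_le_of_lt (norm_nonneg w) hR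
    apply hg_pos
    intro h
    have h1 : ‖EuclideanSpace.single (0:Fin 2) R‖ - ‖w‖ ≤ ‖EuclideanSpace.single (0:Fin 2) R - w‖ :=
      norm_sub_norm_le _ _
    rw [norm_sub_rev, h, norm_zero, norm_single', abs_of_pos hRpos] at h1
    linarith
  · filter_upwards [Filter.eventually_gt_atTop 0] with R hR
    exact hg_pos _ (single_ne R hR.ne')

/-- Limit of the own-cluster factor of the success probability at large
transmitter–receiver distances: `P₂(R,c̄) → exp(-c̄/(1+1/T))` as `R → ∞`. -/
theorem stmt_19
    (g f : E2 → ℝ) (T cbar : ℝ)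
    (hT : 0 < T) (hcbar : 0 < cbar)
    (hg_pos : ∀ x : E2, x ≠ 0 → 0 < g x)
    (hg_cont : ContinuousOn g {(0 : E2)}ᶜ)
    (hg_mono : ∀ x y : E2, x ≠ 0 → y ≠ 0 → ‖x‖ ≤ ‖y‖ → g y ≤ g x)
    (hg_int : ∀ ε : ℝ, 0 < ε → IntegrableOn g (Metric.ball (0 : E2) ε)ᶜ)
    (hg_ratio : ∀ y : E2,
      Tendsto (fun x : E2 => g x / g (x - y)) (Filter.comap norm atTop) (nhds 1))
    (hf_meas : Measurable f) (hf_nonneg : ∀ x, 0 ≤ f x)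
    (hf_prob : ∫ x, f x = 1)
    (hf_iso : ∀ x y : E2, ‖x‖ = ‖y‖ → f x = f y)
    (z : ℝ → E2) (hz : ∀ R, z R = EuclideanSpace.single (0 : Fin 2) R)
    (β : ℝ → E2 → ℝ)
    (hβ : ∀ R y, β R y = ∫ x, g (x - y - z R) / (g (z R) / T + g (x - y - z R)) * f x)
    (P2 : ℝ → ℝ)
    (hP2 : ∀ R, P2 R = ∫ y, Real.exp (-(cbar * β R y)) * f y) :
    Tendsto P2 atTop (nhds (Real.exp (-(cbar / (1 + 1 / T))))) := by
  have hgm : Measurable g := g_measurable g hg_cont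
  have hf_int : Integrable f := by
    by_contra h
    rw [integral_undef h] at hf_prob
    norm_num at hf_prob
  -- a.e. nonvanishing of the shifted argument
  have hae : ∀ (c : E2), ∀ᵐ x : E2, x - c ≠ 0 := by
    intro c
    have h0 : {x : E2 | ¬ (x - c ≠ 0)} = {c} := by
      ext x; simp [sub_eq_zero]
    rw [ae_iff, h0]
    exact measure_singleton c
  -- measurability of the inner integrand (jointly in (y,x))
  have hFmeas : ∀ R : ℝ, Measurable (fun p : E2 × E2 =>
      g (p.2 - p.1 - z R) / (g (z R) / T + g (p.2 - p.1 - z R)) * f p.2) := by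
    intro R
    have h1 : Measurable (fun p : E2 × E2 => p.2 - p.1 - z R) :=
      (measurable_snd.sub measurable_fst).sub measurable_const
    exact (((hgm.comp h1).div (measurable_const.add (hgm.comp h1)))).mul (hf_meas.comp measurable_snd)
  -- pointwise bound on the fraction
  have hfrac_bound : ∀ R : ℝ, 0 < R → ∀ w : E2, w ≠ 0 →
      0 ≤ g w / (g (z R) / T + g w) ∧ g w / (g (z R) / T + g w) ≤ 1 := by
    intro R hR w hw
    have hb : 0 < g (z R) := hg_pos _ (by rw [hz]; exact single_ne R hR.ne')
    have ha : 0 < g w := hg_pos _ hw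
    constructor
    · positivity
    · rw [div_le_one (by positivity)]
      have : 0 ≤ g (z R) / T := by positivity
      linarith
  -- Step 1: inner limit (β R y → T/(1+T))
  have hβlim : ∀ y : E2, Tendsto (fun R => β R y) atTop (nhds (T / (1 + T))) := by
    intro y
    have key : Tendsto (fun R => ∫ x, g (x - y - z R) / (g (z R) / T + g (x - y - z R)) * f x)
        atTop (nhds (∫ x, (T / (1 + T)) * f x)) := by
      apply tendsto_integral_filter_of_dominated_convergence f
      · filter_upwards with R
        have h1 : Measurable (fun x : E2 => x - y - z R) :=
          (measurable_id.sub measurable_const).sub measurable_const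
        exact (((hgm.comp h1).div (measurable_const.add (hgm.comp h1))).mul
          hf_meas).aestronglyMeasurable
      · filter_upwards [eventually_gt_atTop (0:ℝ)] with R hR
        filter_upwards [hae (y + z R)] with x hx
        have hx' : x - y - z R ≠ 0 := by rwa [sub_sub]
        obtain ⟨h0, h1⟩ := hfrac_bound R hR _ hx'
        rw [Real.norm_eq_abs, abs_of_nonneg (mul_nonneg h0 (hf_nonneg x))]
        calc g (x - y - z R) / (g (z R) / T + g (x - y - z R)) * f x
            ≤ 1 * f x := mul_le_mul_of_nonneg_right h1 (hf_nonneg x)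
          _ = f x := one_mul _
      · exact hf_int
      · filter_upwards with x
        have := (frac_lim g T hT hg_pos hg_mono hg_ratio (x - y)).mul_const (f x)
        apply this.congr'
        filter_upwards with R
        simp only [hz]
      
    have heq : (fun R => β R y) = fun R => ∫ x, g (x - y - z R) / (g (z R) / T + g (x - y - z R)) * f x :=
      funext fun R => hβ R y
    rw [heq]
    have : ∫ x, (T / (1 + T)) * f x = T / (1 + T) := by
      rw [integral_const_mul, hf_prob, mul_one]
    rwa [this] at key
  -- β is a.e. measurable in y and nonnegative for R > 0
  have hβmeas : ∀ R : ℝ, Measurable (fun y => β R y) := by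
    intro R
    have : Measurable (fun y => ∫ x, g (x - y - z R) / (g (z R) / T + g (x - y - z R)) * f x) :=
      (StronglyMeasurable.integral_prod_right' (f := fun p : E2 × E2 =>
        g (p.2 - p.1 - z R) / (g (z R) / T + g (p.2 - p.1 - z R)) * f p.2)
        (hFmeas R).stronglyMeasurable).measurable
    have heq : (fun y => β R y) = fun y => ∫ x, g (x - y - z R) / (g (z R) / T + g (x - y - z R)) * f x :=
      funext fun y => hβ R y
    rw [heq]; exact this
  have hβnn : ∀ R : ℝ, 0 < R → ∀ y : E2, 0 ≤ β R y := by
    intro R hR y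
    rw [hβ]
    apply integral_nonneg_of_ae
    filter_upwards [hae (y + z R)] with x hx
    have hx' : x - y - z R ≠ 0 := by rwa [sub_sub]
    exact mul_nonneg (hfrac_bound R hR _ hx').1 (hf_nonneg x)
  -- Step 2: outer dominated convergence
  have main : Tendsto (fun R => ∫ y, Real.exp (-(cbar * β R y)) * f y) atTop
      (nhds (∫ y, Real.exp (-(cbar * (T / (1 + T)))) * f y)) := by
    apply tendsto_integral_filter_of_dominated_convergence f
    · filter_upwards with R
      exact ((Real.measurable_exp.comp ((measurable_const.mul (hβmeas R)).neg)).mul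
        hf_meas).aestronglyMeasurable
    · filter_upwards [eventually_gt_atTop (0:ℝ)] with R hR
      filter_upwards with y
      have h1 : Real.exp (-(cbar * β R y)) ≤ 1 := by
        rw [Real.exp_le_one_iff]
        have := hβnn R hR y
        nlinarith
      have h0 : 0 ≤ Real.exp (-(cbar * β R y)) := (Real.exp_pos _).le
      rw [Real.norm_eq_abs, abs_of_nonneg (mul_nonneg h0 (hf_nonneg y))]
      calc Real.exp (-(cbar * β R y)) * f y ≤ 1 * f y :=
            mul_le_mul_of_nonneg_right h1 (hf_nonneg y)
        _ = f y := one_mul _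
    · exact hf_int
    · filter_upwards with y
      have : Tendsto (fun R => Real.exp (-(cbar * β R y))) atTop
          (nhds (Real.exp (-(cbar * (T / (1 + T)))))) :=
        (Real.continuous_exp.tendsto _).comp (((hβlim y).const_mul cbar).neg)
      exact this.mul_const (f y)
  have hconst : ∫ y, Real.exp (-(cbar * (T / (1 + T)))) * f y
      = Real.exp (-(cbar / (1 + 1 / T))) := by
    rw [integral_const_mul, hf_prob, mul_one]
    congr 1
    have h1 : (1:ℝ) + T ≠ 0 := by positivity
    have h2 : (1:ℝ) + 1 / T ≠ 0 := by positivity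
    field_simp
    ring
  rw [hconst] at main
  have : P2 = fun R => ∫ y, Real.exp (-(cbar * β R y)) * f y := funext hP2
  rw [this]
  exact main
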